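/- (Lemma 2) Let d, m ≥ 1, let r > 0, and let x, y ∈ ℝ^d with ‖x‖ = ‖y‖ = r, and let θ be the angle between x and y, i.e. cos(θ) = ⟨x,y⟩/r². Let G be a random m × d matrix whose entries are i.i.d. standard normal N(0,1) random variables, with rows g_1, …, g_m, and for z ∈ ℝ^d define φ_exp^rand(z) = (exp(⟨g_1, z⟩), …, exp(⟨g_m, z⟩)) ∈ ℝ^m. Define g^m_{r,t} = (t/√m) · exp(r²(2cos(θ) + 1)) · √(1 − exp(−2r²(1 + cos(θ)))). Then for every t > 0, the probability (over G) that |⟨φ_exp^rand(x), φ_exp^rand(y)⟩/(m · exp(r²)) − exp(⟨x, y⟩)| > g^m_{r,t} is at most 1/t². -/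

import Mathlib

open MeasureTheory ProbabilityTheory Real

lemma gaussianPDFReal_mul_exp (c u : ℝ) :
    gaussianPDFReal 0 1 u * Real.exp (c * u)
      = Real.exp (c ^ 2 / 2) * gaussianPDFReal c 1 u := by
  simp only [gaussianPDFReal, NNReal.coe_one, mul_one, sub_zero]
  rw [mul_assoc, ← Real.exp_add, mul_comm (Real.exp (c ^ 2 / 2)), mul_assoc, ← Real.exp_add]
  congr 2
  ring

lemma gaussianReal_eq_withDensity :
    gaussianReal 0 1
      = MeasureTheory.Measure.withDensity volume
          (fun x => ((gaussianPDFReal 0 1 x).toNNReal : ENNReal)) := by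
  rw [gaussianReal_of_var_ne_zero 0 one_ne_zero]
  rfl

lemma integral_gaussian_exp_mul (c : ℝ) :
    ∫ u, Real.exp (c * u) ∂(gaussianReal 0 1) = Real.exp (c ^ 2 / 2) := by
  rw [gaussianReal_eq_withDensity,
    integral_withDensity_eq_integral_smul
      ((measurable_gaussianPDFReal 0 1).real_toNNReal) _]
  have : ∀ u : ℝ, (gaussianPDFReal 0 1 u).toNNReal • Real.exp (c * u)
      = Real.exp (c ^ 2 / 2) * gaussianPDFReal c 1 u := by
    intro u
    rw [NNReal.smul_def, smul_eq_mul, Real.coe_toNNReal _ (gaussianPDFReal_nonneg 0 1 u),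
      gaussianPDFReal_mul_exp]
  simp_rw [this]
  rw [integral_const_mul, integral_gaussianPDFReal_eq_one c one_ne_zero, mul_one]

lemma integrable_gaussian_exp_mul (c : ℝ) :
    Integrable (fun u => Real.exp (c * u)) (gaussianReal 0 1) := by
  rw [gaussianReal_eq_withDensity,
    integrable_withDensity_iff_integrable_smul
      ((measurable_gaussianPDFReal 0 1).real_toNNReal)]
  have : (fun u : ℝ => (gaussianPDFReal 0 1 u).toNNReal • Real.exp (c * u))
      = (fun u => Real.exp (c ^ 2 / 2) * gaussianPDFReal c 1 u) := by
    funext u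
    rw [NNReal.smul_def, smul_eq_mul, Real.coe_toNNReal _ (gaussianPDFReal_nonneg 0 1 u),
      gaussianPDFReal_mul_exp]
  rw [this]
  exact (integrable_gaussianPDFReal c 1).const_mul _

section PiHelpers

variable {ι E : Type*} [Fintype ι] [MeasurableSpace E] (μ : Measure E) [IsProbabilityMeasure μ]

lemma integral_pi_prod (f : ι → E → ℝ) :
    ∫ x : ι → E, ∏ i, f i (x i) ∂(Measure.pi fun _ => μ) = ∏ i, ∫ u, f i u ∂μ := by
  letI : MeasureSpace E := ⟨μ⟩
  haveI : SigmaFinite (volume : Measure E) := inferInstanceAs (SigmaFinite μ)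
  exact MeasureTheory.integral_fintype_prod_eq_prod f

lemma integrable_pi_prod (f : ι → E → ℝ) (hf : ∀ i, Integrable (f i) μ) :
    Integrable (fun x : ι → E => ∏ i, f i (x i)) (Measure.pi fun _ => μ) := by
  letI : MeasureSpace E := ⟨μ⟩
  haveI : SigmaFinite (volume : Measure E) := inferInstanceAs (SigmaFinite μ)
  exact MeasureTheory.Integrable.fintype_prod hf

end PiHelpers

section EvalHelpers

variable {ι E : Type*} [Fintype ι] [DecidableEq ι] [MeasurableSpace E]
  (μ : Measure E) [IsProbabilityMeasure μ]

lemma pi_eval_integral {h : E → ℝ} (hh : Integrable h μ) (l : ι) :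
    ∫ x : ι → E, h (x l) ∂(Measure.pi fun _ => μ) = ∫ u, h u ∂μ := by
  have hrw : (fun x : ι → E => h (x l))
      = fun x : ι → E => ∏ j, (fun u => if j = l then h u else 1) (x j) := by
    funext x
    simp [Finset.prod_ite_eq' Finset.univ l (fun j => h (x j))]
  rw [hrw, integral_pi_prod μ (fun j u => if j = l then h u else 1)]
  have : ∀ j : ι, (∫ u, (fun u => if j = l then h u else 1) u ∂μ)
      = if j = l then ∫ u, h u ∂μ else 1 := by
    intro j
    by_cases hj : j = l <;> simp [hj]
  simp_rw [this]
  simp [Finset.prod_ite_eq' Finset.univ l (fun _ => ∫ u, h u ∂μ)]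

lemma pi_eval_integrable {h : E → ℝ} (hh : Integrable h μ) (l : ι) :
    Integrable (fun x : ι → E => h (x l)) (Measure.pi fun _ => μ) := by
  have hrw : (fun x : ι → E => h (x l))
      = fun x : ι → E => ∏ j, (fun u => if j = l then h u else 1) (x j) := by
    funext x
    simp [Finset.prod_ite_eq' Finset.univ l (fun j => h (x j))]
  rw [hrw]
  refine integrable_pi_prod μ (fun j u => if j = l then h u else 1) (fun j => ?_)
  by_cases hj : j = l <;> simp [hj, hh]

lemma pi_eval_pair_integral {h₁ h₂ : E → ℝ} (hh₁ : Integrable h₁ μ) (hh₂ : Integrable h₂ μ)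
    {l k : ι} (hlk : l ≠ k) :
    ∫ x : ι → E, h₁ (x l) * h₂ (x k) ∂(Measure.pi fun _ => μ)
      = (∫ u, h₁ u ∂μ) * ∫ u, h₂ u ∂μ := by
  have hrw : (fun x : ι → E => h₁ (x l) * h₂ (x k))
      = fun x : ι → E =>
          ∏ j, (fun u => (if j = l then h₁ u else 1) * (if j = k then h₂ u else 1)) (x j) := by
    funext x
    simp only [Finset.prod_mul_distrib]
    simp [Finset.prod_ite_eq' Finset.univ l (fun j => h₁ (x j)),
      Finset.prod_ite_eq' Finset.univ k (fun j => h₂ (x j))]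
  rw [hrw, integral_pi_prod μ (fun j u => (if j = l then h₁ u else 1) * (if j = k then h₂ u else 1))]
  have : ∀ j : ι, (∫ u, (fun u => (if j = l then h₁ u else 1) * (if j = k then h₂ u else 1)) u ∂μ)
      = (if j = l then ∫ u, h₁ u ∂μ else 1) * (if j = k then ∫ u, h₂ u ∂μ else 1) := by
    intro j
    by_cases hjl : j = l <;> by_cases hjk : j = k
    · exact absurd (hjl ▸ hjk) hlk
    · simp [hjl, hjk, hlk, (hjl ▸ hlk : j ≠ k)]
    · simp [hjl, hjk, (hjk ▸ hlk.symm : k ≠ l), hlk.symm]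
    · simp [hjl, hjk]
  simp_rw [this]
  rw [Finset.prod_mul_distrib]
  simp [Finset.prod_ite_eq' Finset.univ l (fun _ => ∫ u, h₁ u ∂μ),
    Finset.prod_ite_eq' Finset.univ k (fun _ => ∫ u, h₂ u ∂μ)]

lemma pi_eval_pair_integrable {h₁ h₂ : E → ℝ} (hh₁ : Integrable h₁ μ) (hh₂ : Integrable h₂ μ)
    {l k : ι} (hlk : l ≠ k) :
    Integrable (fun x : ι → E => h₁ (x l) * h₂ (x k)) (Measure.pi fun _ => μ) := by
  have hrw : (fun x : ι → E => h₁ (x l) * h₂ (x k))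
      = fun x : ι → E =>
          ∏ j, (fun u => (if j = l then h₁ u else 1) * (if j = k then h₂ u else 1)) (x j) := by
    funext x
    simp only [Finset.prod_mul_distrib]
    simp [Finset.prod_ite_eq' Finset.univ l (fun j => h₁ (x j)),
      Finset.prod_ite_eq' Finset.univ k (fun j => h₂ (x j))]
  rw [hrw]
  refine integrable_pi_prod μ
    (fun j u => (if j = l then h₁ u else 1) * (if j = k then h₂ u else 1)) (fun j => ?_)
  by_cases hjl : j = l <;> by_cases hjk : j = k
  · exact absurd (hjl ▸ hjk) hlk
  · simpa [hjl, hlk] using hh₁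
  · simpa [hjl, hjk, hlk.symm] using hh₂
  · simp [hjl, hjk]

end EvalHelpers

lemma integrable_pi_gaussian_exp {d : ℕ} (z : Fin d → ℝ) :
    Integrable (fun g : Fin d → ℝ => Real.exp (∑ i, g i * z i))
      (Measure.pi fun _ => gaussianReal 0 1) := by
  have hrw : (fun g : Fin d → ℝ => Real.exp (∑ i, g i * z i))
      = fun g : Fin d → ℝ => ∏ i, (fun u => Real.exp (z i * u)) (g i) := by
    funext g
    rw [← Real.exp_sum]
    congr 1
    exact Finset.sum_congr rfl fun i _ => by ring
  rw [hrw]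
  exact integrable_pi_prod _ (fun i u => Real.exp (z i * u))
    (fun i => integrable_gaussian_exp_mul (z i))

lemma integral_pi_gaussian_exp {d : ℕ} (z : Fin d → ℝ) :
    ∫ g : Fin d → ℝ, Real.exp (∑ i, g i * z i) ∂(Measure.pi fun _ => gaussianReal 0 1)
      = Real.exp ((∑ i, z i ^ 2) / 2) := by
  have hrw : (fun g : Fin d → ℝ => Real.exp (∑ i, g i * z i))
      = fun g : Fin d → ℝ => ∏ i, (fun u => Real.exp (z i * u)) (g i) := by
    funext g
    rw [← Real.exp_sum]
    congr 1
    exact Finset.sum_congr rfl fun i _ => by ring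
  rw [hrw, integral_pi_prod _ (fun i u => Real.exp (z i * u))]
  simp_rw [integral_gaussian_exp_mul]
  rw [← Real.exp_sum, Finset.sum_div]


lemma lemma2_final_calc (A E₀ t s r S : ℝ) (m : ℕ) (hmpos : (0:ℝ) < m) (ht : 0 < t)
    (hSpos : 0 < S) (hSeq : S = 2*r^2 + 2*s)
    (hA : A = Real.exp (S/2)) (hE₀ : E₀ = Real.exp (r^2))
    (hqpos : 0 < A) (hE₀pos : 0 < E₀)
    (V c₀ ε : ℝ) (hV : V = (m:ℝ) * (Real.exp (2*S) - A^2))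
    (hεeq : ε = (t / Real.sqrt m) * Real.exp (2*s + r^2) * Real.sqrt (1 - Real.exp (-S)))
    (hc₀ : c₀ = ε * ((m:ℝ) * E₀)) :
    V / c₀ ^ 2 = 1 / t ^ 2 := by
  have hexpSS : Real.exp S = A ^ 2 := by
    rw [hA, pow_two, ← Real.exp_add]; congr 1; ring
  have hexp2S : Real.exp (2*S) = A ^ 2 * A ^ 2 := by
    rw [two_mul, Real.exp_add, hexpSS]
  have hA1 : 1 < A := by rw [hA]; exact Real.one_lt_exp_iff.2 (by linarith)
  have hA2pos : (0:ℝ) < A ^ 2 := pow_pos hqpos 2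
  have hXne : ((m:ℝ) * (A ^ 2 * A ^ 2 - A ^ 2)) ≠ 0 := by
    have h3 : A ^ 2 * A ^ 2 - A ^ 2 = A ^ 2 * (A ^ 2 - 1) := by ring
    have h2 : 1 < A ^ 2 := by nlinarith
    have : 0 < A ^ 2 * A ^ 2 - A ^ 2 := by rw [h3]; exact mul_pos hA2pos (by linarith)
    positivity
  have hexp2sr : Real.exp (2 * s + r ^ 2) = A ^ 2 / E₀ := by
    rw [eq_div_iff hE₀pos.ne', hE₀, ← Real.exp_add, ← hexpSS]
    congr 1; linarith
  have h1mA : (1 : ℝ) - Real.exp (-S) = 1 - 1 / A ^ 2 := by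
    rw [Real.exp_neg, hexpSS, inv_eq_one_div]
  have hsq1 : Real.sqrt (1 - Real.exp (-S)) ^ 2 = 1 - Real.exp (-S) := by
    refine Real.sq_sqrt ?_
    have : Real.exp (-S) < 1 := Real.exp_lt_one_iff.2 (by linarith)
    linarith
  have hsqm : Real.sqrt (m : ℝ) ^ 2 = (m : ℝ) := Real.sq_sqrt hmpos.le
  have hc2 : c₀ ^ 2 = t ^ 2 * ((m:ℝ) * (A ^ 2 * A ^ 2 - A ^ 2)) := by
    rw [hc₀, hεeq, hexp2sr, mul_pow, mul_pow, mul_pow, div_pow, div_pow,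
      hsq1, hsqm, h1mA]
    field_simp
  rw [hV, hexp2S, hc2, mul_comm (t ^ 2) _, div_mul_eq_div_div, div_self hXne]


/-- The law of a random `m × d` matrix (viewed as `Fin m → Fin d → ℝ`, with rows
`G 0, …, G (m-1)`) whose `m·d` entries are i.i.d. standard normal `N(0,1)`. -/
noncomputable def gaussianMatrix (m d : ℕ) : Measure (Fin m → Fin d → ℝ) :=
  Measure.pi fun _ => Measure.pi fun _ => gaussianReal 0 1

set_option maxHeartbeats 1000000 in
/-- Lemma 2 of the paper: for `x, y ∈ ℝ^d` with `‖x‖ = ‖y‖ = r`, angle `θ`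
between them (`cos θ = ⟨x,y⟩ / r²`), and
`g^m_{r,t} = (t/√m)·exp(r²(2cos θ + 1))·√(1 - exp(-2r²(1 + cos θ)))`, for every
`t > 0` the probability over the Gaussian matrix `G` that
`|⟨φ_exp^rand(x), φ_exp^rand(y)⟩/(m·exp(r²)) - exp(⟨x,y⟩)| > g^m_{r,t}` is at
most `1/t²`, where `φ_exp^rand(z) = (exp(⟨g_1,z⟩), …, exp(⟨g_m,z⟩))`. -/
theorem lemma2_concentration (d m : ℕ) (hd : 1 ≤ d) (hm : 1 ≤ m)
    (r : ℝ) (hr : 0 < r) (x y : Fin d → ℝ)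
    (hx : Real.sqrt (∑ i, x i ^ 2) = r) (hy : Real.sqrt (∑ i, y i ^ 2) = r)
    (θ : ℝ) (hθ : Real.cos θ = (∑ i, x i * y i) / r ^ 2)
    (t : ℝ) (ht : 0 < t) :
    gaussianMatrix m d
      {G | |(∑ l : Fin m,
              Real.exp (∑ i, G l i * x i) * Real.exp (∑ i, G l i * y i))
              / (m * Real.exp (r ^ 2))
            - Real.exp (∑ i, x i * y i)|
          > (t / Real.sqrt m) * Real.exp (r ^ 2 * (2 * Real.cos θ + 1))
              * Real.sqrt (1 - Real.exp (-(2 * r ^ 2 * (1 + Real.cos θ))))}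
      ≤ ENNReal.ofReal (1 / t ^ 2) := by
  classical
  have hmpos : (0:ℝ) < (m:ℝ) := by exact_mod_cast hm
  have hm0 : ((m:ℝ)) ≠ 0 := hmpos.ne'
  set νd : Measure (Fin d → ℝ) := Measure.pi fun _ => gaussianReal 0 1 with hνd
  haveI : IsProbabilityMeasure νd := by rw [hνd]; infer_instance
  have hP : gaussianMatrix m d = Measure.pi (fun _ : Fin m => νd) := rfl
  set z : Fin d → ℝ := fun i => x i + y i with hz
  set s : ℝ := ∑ i, x i * y i with hs
  set S : ℝ := ∑ i, z i ^ 2 with hS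
  have hx2 : (∑ i, x i ^ 2) = r ^ 2 := by
    rw [← hx, Real.sq_sqrt (Finset.sum_nonneg fun i _ => sq_nonneg _)]
  have hy2 : (∑ i, y i ^ 2) = r ^ 2 := by
    rw [← hy, Real.sq_sqrt (Finset.sum_nonneg fun i _ => sq_nonneg _)]
  have hSeq : S = 2 * r ^ 2 + 2 * s := by
    have h1 : S = ∑ i, (x i ^ 2 + 2 * (x i * y i) + y i ^ 2) := by
      rw [hS]
      exact Finset.sum_congr rfl fun i _ => by simp only [hz]; ring
    rw [h1, Finset.sum_add_distrib, Finset.sum_add_distrib, hx2, hy2, ← Finset.mul_sum, ← hs]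
    ring
  have hSnonneg : 0 ≤ S := Finset.sum_nonneg fun i _ => sq_nonneg _
  have hr2 : (r:ℝ) ^ 2 ≠ 0 := pow_ne_zero 2 hr.ne'
  have hcos_r : r ^ 2 * Real.cos θ = s := by rw [hθ]; field_simp
  have hθ1 : r ^ 2 * (2 * Real.cos θ + 1) = 2 * s + r ^ 2 := by linear_combination 2 * hcos_r
  have hθ2 : 2 * r ^ 2 * (1 + Real.cos θ) = S := by linear_combination 2 * hcos_r - hSeq
  have hFeq : ∀ (G : Fin m → Fin d → ℝ) (l : Fin m),
      Real.exp (∑ i, G l i * x i) * Real.exp (∑ i, G l i * y i)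
        = Real.exp (∑ i, G l i * z i) := by
    intro G l
    rw [← Real.exp_add, ← Finset.sum_add_distrib]
    congr 1
    exact Finset.sum_congr rfl fun i _ => by simp only [hz]; ring
  rcases eq_or_lt_of_le hSnonneg with hS0 | hSpos
  · -- degenerate case : S = 0, the event is empty
    have hzi : ∀ i, z i = 0 := by
      intro i
      have h := (Finset.sum_eq_zero_iff_of_nonneg (fun j _ => sq_nonneg (z j))).1 hS0.symm
      have := h i (Finset.mem_univ i)
      exact pow_eq_zero_iff (two_ne_zero) |>.1 this
    have hsr : s = - r ^ 2 := by linarith [hSeq, hS0.symm]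
    have hempty : {G : Fin m → Fin d → ℝ | |(∑ l : Fin m,
              Real.exp (∑ i, G l i * x i) * Real.exp (∑ i, G l i * y i))
              / (m * Real.exp (r ^ 2))
            - Real.exp (∑ i, x i * y i)|
          > (t / Real.sqrt m) * Real.exp (r ^ 2 * (2 * Real.cos θ + 1))
              * Real.sqrt (1 - Real.exp (-(2 * r ^ 2 * (1 + Real.cos θ))))} = ∅ := by
      ext G
      simp only [Set.mem_setOf_eq, Set.mem_empty_iff_false, iff_false, not_lt]
      have h1 : (∑ l : Fin m, Real.exp (∑ i, G l i * x i) * Real.exp (∑ i, G l i * y i))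
          = (m : ℝ) := by
        rw [Finset.sum_congr rfl fun l _ => hFeq G l]
        have : ∀ l : Fin m, Real.exp (∑ i, G l i * z i) = 1 := by
          intro l
          have : (∑ i, G l i * z i) = 0 := by
            apply Finset.sum_eq_zero
            intro i _
            rw [hzi i, mul_zero]
          rw [this, Real.exp_zero]
        rw [Finset.sum_congr rfl fun l _ => this l]
        simp
      have h2 : Real.exp (-(2 * r ^ 2 * (1 + Real.cos θ))) = 1 := by
        rw [hθ2, ← hS0, neg_zero, Real.exp_zero]
      rw [h1, h2, ← hs, hsr]
      have h3 : (m : ℝ) / ((m : ℝ) * Real.exp (r ^ 2)) = Real.exp (-r ^ 2) := by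
        rw [Real.exp_neg]
        field_simp
      rw [h3]
      simp
    rw [hempty]
    simp
  · -- main case : S > 0
    set F : (Fin d → ℝ) → ℝ := fun g => Real.exp (∑ i, g i * z i) with hF
    set X : (Fin m → Fin d → ℝ) → ℝ := fun G => ∑ l, F (G l) with hX
    set A : ℝ := Real.exp (S / 2) with hA
    set B : ℝ := Real.exp (2 * S) with hB
    have hFint : Integrable F νd := integrable_pi_gaussian_exp z
    have hAval : ∫ g, F g ∂νd = A := by
      rw [hF, hνd, integral_pi_gaussian_exp z, hA, hS]
    have hFF : (fun g : Fin d → ℝ => F g * F g)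
        = fun g : Fin d → ℝ => Real.exp (∑ i, g i * (2 * z i)) := by
      funext g
      rw [hF, ← Real.exp_add, ← Finset.sum_add_distrib]
      congr 1
      exact Finset.sum_congr rfl fun i _ => by ring
    have hFFint : Integrable (fun g => F g * F g) νd := by
      rw [hFF]; exact integrable_pi_gaussian_exp _
    have hBval : ∫ g, F g * F g ∂νd = B := by
      rw [hFF, hνd, integral_pi_gaussian_exp, hB]
      congr 1
      have : (∑ i, (2 * z i) ^ 2) = 4 * S := by
        rw [hS, Finset.mul_sum]
        exact Finset.sum_congr rfl fun i _ => by ring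
      rw [this]; ring
    have hFmeas : Measurable F := by
      apply Real.measurable_exp.comp
      exact Finset.measurable_sum _ fun i _ => (measurable_pi_apply i).mul_const _
    set P : Measure (Fin m → Fin d → ℝ) := Measure.pi (fun _ : Fin m => νd) with hPdef
    haveI : IsProbabilityMeasure P := by rw [hPdef]; infer_instance
    have hXlint : ∀ l : Fin m, Integrable (fun G : Fin m → Fin d → ℝ => F (G l)) P :=
      fun l => pi_eval_integrable νd hFint l
    have hXlsq : ∀ l : Fin m, Integrable (fun G : Fin m → Fin d → ℝ => F (G l) ^ 2) P := by
      intro l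
      have := pi_eval_integrable νd hFFint l
      simpa [pow_two] using this
    have hMem : ∀ l : Fin m, MemLp (fun G : Fin m → Fin d → ℝ => F (G l)) 2 P := by
      intro l
      refine (memLp_two_iff_integrable_sq ?_).2 (hXlsq l)
      exact (hFmeas.comp (measurable_pi_apply l)).aestronglyMeasurable
    have hXmem : MemLp X 2 P := by
      have h := memLp_finset_sum' (μ := P) Finset.univ
        (fun l (_ : l ∈ Finset.univ) => hMem l)
      have hfun : (∑ l : Fin m, fun G : Fin m → Fin d → ℝ => F (G l)) = X := by
        funext G
        rw [hX]
        simp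
      rwa [hfun] at h
    have hEX : ∫ G, X G ∂P = (m : ℝ) * A := by
      rw [hX]
      rw [integral_finset_sum _ fun l _ => hXlint l]
      have : ∀ l : Fin m, ∫ G, F (G l) ∂P = A := by
        intro l
        rw [hPdef, pi_eval_integral νd hFint l, hAval]
      rw [Finset.sum_congr rfl fun l _ => this l]
      simp [mul_comm]
    have hpair_int : ∀ l k : Fin m,
        Integrable (fun G : Fin m → Fin d → ℝ => F (G l) * F (G k)) P := by
      intro l k
      by_cases hlk : l = k
      · subst hlk
        exact pi_eval_integrable νd hFFint l
      · exact pi_eval_pair_integrable νd hFint hFint hlk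
    have hpair_val : ∀ l k : Fin m,
        ∫ G, F (G l) * F (G k) ∂P = if l = k then B else A ^ 2 := by
      intro l k
      by_cases hlk : l = k
      · subst hlk
        rw [if_pos rfl, hPdef, pi_eval_integral νd hFFint l, hBval]
      · rw [if_neg hlk, hPdef, pi_eval_pair_integral νd hFint hFint hlk, hAval, pow_two]
    have hEX2 : ∫ G, X G ^ 2 ∂P
        = (m : ℝ) * B + ((m : ℝ) ^ 2 - (m : ℝ)) * A ^ 2 := by
      have hsq : ∀ G : Fin m → Fin d → ℝ, X G ^ 2 = ∑ l, ∑ k, F (G l) * F (G k) := by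
        intro G
        rw [hX, pow_two]
        exact Finset.sum_mul_sum _ _ _ _
      calc ∫ G, X G ^ 2 ∂P = ∫ G, ∑ l, ∑ k, F (G l) * F (G k) ∂P := by
            exact integral_congr_ae (Filter.Eventually.of_forall fun G => hsq G)
        _ = ∑ l, ∫ G, ∑ k, F (G l) * F (G k) ∂P := by
            exact integral_finset_sum _ fun l _ =>
              integrable_finset_sum _ fun k _ => hpair_int l k
        _ = ∑ l : Fin m, ∑ k : Fin m, (if l = k then B else A ^ 2) := by
            refine Finset.sum_congr rfl fun l _ => ?_
            rw [integral_finset_sum _ fun k _ => hpair_int l k]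
            exact Finset.sum_congr rfl fun k _ => hpair_val l k
        _ = ∑ l : Fin m, (B + ((m : ℝ) - 1) * A ^ 2) := by
            refine Finset.sum_congr rfl fun l _ => ?_
            have h1 : ∀ k : Fin m, (if l = k then B else A ^ 2)
                = A ^ 2 + (if l = k then B - A ^ 2 else 0) := by
              intro k; split_ifs <;> ring
            rw [Finset.sum_congr rfl fun k _ => h1 k, Finset.sum_add_distrib,
              Finset.sum_ite_eq _ l (fun _ => B - A ^ 2)]
            simp [Finset.card_univ]
            ring
        _ = (m : ℝ) * B + ((m : ℝ) ^ 2 - (m : ℝ)) * A ^ 2 := by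
            rw [Finset.sum_const, Finset.card_univ]
            simp only [Fintype.card_fin, nsmul_eq_mul]
            ring
    have hVar : variance X P = (m : ℝ) * (B - A ^ 2) := by
      rw [variance_eq_sub hXmem]
      have h1 : ∫ G, (X ^ 2) G ∂P = ∫ G, X G ^ 2 ∂P := by
        exact integral_congr_ae (Filter.Eventually.of_forall fun G => by simp [Pi.pow_apply])
      rw [h1, hEX2, hEX]
      ring
    -- positivity facts
    have hqpos : (0:ℝ) < A := Real.exp_pos _
    have hexpS_lt : Real.exp (-S) < 1 := Real.exp_lt_one_iff.2 (by linarith)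
    have hsqrtS_pos : 0 < Real.sqrt (1 - Real.exp (-S)) := Real.sqrt_pos.2 (by linarith)
    have hsqrtm_pos : 0 < Real.sqrt (m : ℝ) := Real.sqrt_pos.2 hmpos
    set E₀ : ℝ := Real.exp (r ^ 2) with hE₀
    have hE₀pos : 0 < E₀ := Real.exp_pos _
    set ε : ℝ := (t / Real.sqrt m) * Real.exp (r ^ 2 * (2 * Real.cos θ + 1))
        * Real.sqrt (1 - Real.exp (-(2 * r ^ 2 * (1 + Real.cos θ)))) with hε
    have hεeq : ε = (t / Real.sqrt m) * Real.exp (2 * s + r ^ 2)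
        * Real.sqrt (1 - Real.exp (-S)) := by
      rw [hε, hθ1, hθ2]
    have hεpos : 0 < ε := by
      rw [hεeq]
      positivity
    set c₀ : ℝ := ε * ((m : ℝ) * E₀) with hc₀
    have hMrpos : 0 < (m : ℝ) * E₀ := by positivity
    have hc₀pos : 0 < c₀ := mul_pos hεpos hMrpos
    have hcheb := meas_ge_le_variance_div_sq (μ := P) hXmem hc₀pos
    have hAE : A = E₀ * Real.exp s := by
      rw [hA, hE₀, ← Real.exp_add]
      congr 1
      linarith [hSeq]
    have hsub : {G : Fin m → Fin d → ℝ | |(∑ l : Fin m,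
              Real.exp (∑ i, G l i * x i) * Real.exp (∑ i, G l i * y i))
              / (m * Real.exp (r ^ 2))
            - Real.exp (∑ i, x i * y i)|
          > (t / Real.sqrt m) * Real.exp (r ^ 2 * (2 * Real.cos θ + 1))
              * Real.sqrt (1 - Real.exp (-(2 * r ^ 2 * (1 + Real.cos θ))))}
        ⊆ {G | c₀ ≤ |X G - ∫ G', X G' ∂P|} := by
      intro G hG
      simp only [Set.mem_setOf_eq] at hG ⊢
      have hsum : (∑ l : Fin m, Real.exp (∑ i, G l i * x i) * Real.exp (∑ i, G l i * y i))
          = X G := by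
        rw [hX]
        exact Finset.sum_congr rfl fun l _ => hFeq G l
      rw [hsum, ← hs, ← hε, ← hE₀] at hG
      rw [hEX]
      have hkey : X G - (m : ℝ) * A
          = (X G / ((m : ℝ) * E₀) - Real.exp s) * ((m : ℝ) * E₀) := by
        rw [hAE]
        field_simp
      rw [hkey, abs_mul, abs_of_pos hMrpos, hc₀]
      exact mul_le_mul_of_nonneg_right (le_of_lt hG) hMrpos.le
    have hmono := measure_mono (μ := P) hsub
    have hfinal : variance X P / c₀ ^ 2 = 1 / t ^ 2 :=
      lemma2_final_calc A E₀ t s r S m hmpos ht hSpos hSeq hA hE₀ hqpos hE₀pos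
        (variance X P) c₀ ε (by rw [hVar, hB]) hεeq hc₀
    calc gaussianMatrix m d _ ≤ P {G | c₀ ≤ |X G - ∫ G', X G' ∂P|} := by
          rw [hP]; exact hmono
      _ ≤ ENNReal.ofReal (variance X P / c₀ ^ 2) := hcheb
      _ = ENNReal.ofReal (1 / t ^ 2) := by rw [hfinal]
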